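/- Let p ≥ 3 be prime and k an integer with 2 ≤ k ≤ v-2 and p | k. Let G and G' be graphs on the same vertex set V of size v such that for every k-element subset K of V, e(G|_K) ≡ e(G'|_K) (mod p). Then G = G', or one of G, G' is the complete graph on V and the other is the empty graph on V. -/

import Mathlib

/-- Number of edges of the induced subgraph of `G` on a subset `K`. -/
def edgeCountOn {V : Type*} [Fintype V] [DecidableEq V] (G : SimpleGraph V)
    [DecidableRel G.Adj] (K : Finset V) : ℕ :=
  (G.edgeFinset.filter (· ∈ K.sym2)).card

private def restrOn {V : Type*} [DecidableEq V] (G : SimpleGraph V) (K : Finset V) :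
    SimpleGraph V where
  Adj x y := G.Adj x y ∧ x ∈ K ∧ y ∈ K
  symm := ⟨fun x y h => ⟨h.1.symm, h.2.2, h.2.1⟩⟩
  loopless := ⟨fun x h => G.irrefl h.1⟩

private lemma restrOn_adj {V : Type*} [DecidableEq V] (G : SimpleGraph V) (K : Finset V)
    (x y : V) : (restrOn G K).Adj x y ↔ G.Adj x y ∧ x ∈ K ∧ y ∈ K := Iff.rfl

private instance restrOnDec {V : Type*} [DecidableEq V] (G : SimpleGraph V)
    [DecidableRel G.Adj] (K : Finset V) : DecidableRel (restrOn G K).Adj :=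
  fun x y => inferInstanceAs (Decidable (G.Adj x y ∧ x ∈ K ∧ y ∈ K))

private lemma two_mul_edgeCountOn {V : Type*} [Fintype V] [DecidableEq V]
    (G : SimpleGraph V) [DecidableRel G.Adj] (K : Finset V) :
    2 * edgeCountOn G K = ∑ x ∈ K, ∑ y ∈ K, (if G.Adj x y then 1 else 0) := by
  have h1 : (restrOn G K).edgeFinset = G.edgeFinset.filter (· ∈ K.sym2) := by
    ext e
    induction e using Sym2.ind with
    | _ x y =>
      simp only [Finset.mem_filter, SimpleGraph.mem_edgeFinset, SimpleGraph.mem_edgeSet,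
        Finset.mk_mem_sym2_iff, restrOn_adj]
  rw [edgeCountOn, ← h1, SimpleGraph.two_mul_card_edgeFinset]
  rw [Finset.card_filter, Fintype.sum_prod_type]
  rw [← Finset.sum_subset (Finset.subset_univ K) (fun x _ hx => Finset.sum_eq_zero fun y _ => by
      simp [restrOn_adj, hx])]
  refine Finset.sum_congr rfl fun x hx => ?_
  rw [← Finset.sum_subset (Finset.subset_univ K) (fun y _ hy => by simp [restrOn_adj, hy])]
  refine Finset.sum_congr rfl fun y hy => ?_
  simp [restrOn_adj, hx, hy]

private lemma pair_const {V : Type*} [Fintype V] [DecidableEq V] (p k : ℕ)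
    [Fact p.Prime] (hp3 : 3 ≤ p) (hk2 : 2 ≤ k) (hkv : k + 2 ≤ Fintype.card V) (hpk : p ∣ k)
    (f : V → V → ZMod p) (hsymm : ∀ x y, f x y = f y x) (hdiag : ∀ x, f x x = 0)
    (hS0 : ∀ K : Finset V, K.card = k → ∑ x ∈ K, ∑ y ∈ K, f x y = 0) :
    ∀ x y z : V, x ≠ y → x ≠ z → y ≠ z → f x y = f x z := by
  have hk0 : ((k : ℕ) : ZMod p) = 0 := (ZMod.natCast_eq_zero_iff k p).mpr hpk
  have h2ne : (2 : ZMod p) ≠ 0 := by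
    intro hh
    have hd : p ∣ 2 := (ZMod.natCast_eq_zero_iff 2 p).mp (by exact_mod_cast hh)
    have := Nat.le_of_dvd (by norm_num) hd
    omega
  -- Step 1: sums over (k+1)-sets vanish
  have hS1 : ∀ L : Finset V, L.card = k + 1 → ∑ x ∈ L, ∑ y ∈ L, f x y = 0 := by
    intro L hL
    have hstep : ∀ a ∈ L, ∑ x ∈ L.erase a, ∑ y ∈ L.erase a, f x y
        = ∑ x ∈ L, ∑ y ∈ L, f x y - 2 * ∑ y ∈ L, f a y + f a a := by
      intro a ha
      simp only [Finset.sum_erase_eq_sub ha, Finset.sum_sub_distrib]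
      rw [show ∑ x ∈ L, f x a = ∑ x ∈ L, f a x from Finset.sum_congr rfl fun x _ => hsymm x a]
      ring
    have hsum : ∑ a ∈ L, (∑ x ∈ L.erase a, ∑ y ∈ L.erase a, f x y) = 0 :=
      Finset.sum_eq_zero fun a ha => hS0 _ (by rw [Finset.card_erase_of_mem ha, hL]; omega)
    rw [Finset.sum_congr rfl hstep] at hsum
    simp only [hdiag, add_zero, Finset.sum_sub_distrib, Finset.sum_const, ← Finset.mul_sum] at hsum
    rw [hL] at hsum
    have hc : ((k + 1 : ℕ) : ZMod p) = 1 := by push_cast [hk0]; ring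
    rw [nsmul_eq_mul, hc] at hsum
    linear_combination -hsum
  -- Step 2: row sums vanish
  have hD : ∀ L : Finset V, L.card = k + 1 → ∀ a ∈ L, ∑ w ∈ L.erase a, f a w = 0 := by
    intro L hL a ha
    have h1 := hS1 L hL
    have h2 : ∑ x ∈ L.erase a, ∑ y ∈ L.erase a, f x y = 0 :=
      hS0 _ (by rw [Finset.card_erase_of_mem ha, hL]; omega)
    have hx : ∑ x ∈ L, ∑ y ∈ L, f x y
        = ∑ x ∈ L.erase a, ∑ y ∈ L.erase a, f x y
          + 2 * ∑ w ∈ L.erase a, f a w + f a a := by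
      simp only [Finset.sum_erase_eq_sub ha, Finset.sum_sub_distrib]
      rw [show ∑ x ∈ L, f x a = ∑ x ∈ L, f a x from Finset.sum_congr rfl fun x _ => hsymm x a]
      ring
    have h3 : 2 * ∑ w ∈ L.erase a, f a w = 0 := by
      linear_combination -hx + h1 - h2 - hdiag a
    exact (mul_eq_zero.mp h3).resolve_left h2ne
  -- Step 3
  intro x y z hxy hxz hyz
  obtain ⟨L, hsubL, hLsub, hcard⟩ :=
    Finset.exists_subsuperset_card_eq (s := ({x, y} : Finset V)) (t := Finset.univ.erase z)
      (n := k + 1)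
      (by
        intro w hw
        rw [Finset.mem_insert, Finset.mem_singleton] at hw
        rcases hw with rfl | rfl <;> exact Finset.mem_erase.mpr ⟨by assumption, Finset.mem_univ _⟩)
      (by rw [Finset.card_pair hxy]; omega)
      (by rw [Finset.card_erase_of_mem (Finset.mem_univ z), Finset.card_univ]; omega)
  have hxL : x ∈ L := hsubL (by simp)
  have hyL : y ∈ L := hsubL (by simp)
  have hzL : z ∉ L := fun hz => (Finset.mem_erase.mp (hLsub hz)).1 rfl
  have D1 := hD L hcard x hxL
  have hzLe : z ∉ L.erase y := fun hz => hzL (Finset.mem_of_mem_erase hz)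
  have hcard' : (insert z (L.erase y)).card = k + 1 := by
    rw [Finset.card_insert_of_notMem hzLe, Finset.card_erase_of_mem hyL, hcard]; omega
  have hxL' : x ∈ insert z (L.erase y) :=
    Finset.mem_insert_of_mem (Finset.mem_erase.mpr ⟨hxy, hxL⟩)
  have D2 := hD _ hcard' x hxL'
  have hLe' : (insert z (L.erase y)).erase x = insert z ((L.erase x).erase y) := by
    rw [Finset.erase_insert_of_ne (Ne.symm hxz), Finset.erase_right_comm]
  rw [hLe', Finset.sum_insert (fun hz => hzL
    (Finset.mem_of_mem_erase (Finset.mem_of_mem_erase hz)))] at D2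
  rw [← Finset.add_sum_erase _ _ (Finset.mem_erase.mpr ⟨Ne.symm hxy, hyL⟩)] at D1
  linear_combination D1 - D2

theorem graphs_eq_or_extreme_of_edgeCount_mod_p {V : Type*} [Fintype V] [DecidableEq V]
    (G G' : SimpleGraph V) [DecidableRel G.Adj] [DecidableRel G'.Adj]
    (p k : ℕ) (hp : p.Prime) (hp3 : 3 ≤ p)
    (hk2 : 2 ≤ k) (hkv : k + 2 ≤ Fintype.card V) (hpk : p ∣ k)
    (h : ∀ K : Finset V, K.card = k → edgeCountOn G K ≡ edgeCountOn G' K [MOD p]) :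
    G = G' ∨ (G = ⊤ ∧ G' = ⊥) ∨ (G = ⊥ ∧ G' = ⊤) := by
  haveI := Fact.mk hp
  set F : V → V → ZMod p :=
    fun x y => (if G.Adj x y then (1 : ZMod p) else 0) - (if G'.Adj x y then 1 else 0) with hF
  have hsymm : ∀ x y, F x y = F y x := by
    intro x y
    simp only [hF, SimpleGraph.adj_comm]
  have hdiag : ∀ x, F x x = 0 := by intro x; simp [hF]
  have hS0 : ∀ K : Finset V, K.card = k → ∑ x ∈ K, ∑ y ∈ K, F x y = 0 := by
    intro K hK
    have e1 : ((2 * edgeCountOn G K : ℕ) : ZMod p)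
        = ∑ x ∈ K, ∑ y ∈ K, (if G.Adj x y then (1 : ZMod p) else 0) := by
      rw [two_mul_edgeCountOn]; push_cast; rfl
    have e2 : ((2 * edgeCountOn G' K : ℕ) : ZMod p)
        = ∑ x ∈ K, ∑ y ∈ K, (if G'.Adj x y then (1 : ZMod p) else 0) := by
      rw [two_mul_edgeCountOn]; push_cast; rfl
    have e3 : ((edgeCountOn G K : ℕ) : ZMod p) = ((edgeCountOn G' K : ℕ) : ZMod p) :=
      (ZMod.natCast_eq_natCast_iff _ _ _).mpr (h K hK)
    simp only [hF, Finset.sum_sub_distrib]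
    rw [← e1, ← e2]
    push_cast
    rw [e3]
    ring
  have hpair := pair_const p k hp3 hk2 hkv hpk F hsymm hdiag hS0
  have h2ne : (2 : ZMod p) ≠ 0 := by
    intro hh
    have hd : p ∣ 2 := (ZMod.natCast_eq_zero_iff 2 p).mp (by exact_mod_cast hh)
    have := Nat.le_of_dvd (by norm_num) hd
    omega
  have h1ne : (1 : ZMod p) ≠ 0 := one_ne_zero
  have hneg1 : (-1 : ZMod p) ≠ 0 := by simpa using h1ne
  have h1n : (1 : ZMod p) ≠ -1 := fun hh => h2ne (by linear_combination hh)
  obtain ⟨x0, y0, hx0⟩ := Fintype.exists_pair_of_one_lt_card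
    (α := V) (by omega : 1 < Fintype.card V)
  have hconst : ∀ x y : V, x ≠ y → F x y = F x0 y0 := by
    intro x y hxy
    by_cases h1 : x = x0
    · by_cases h2 : y = y0
      · rw [h1, h2]
      · rw [h1]
        exact hpair x0 y y0 (fun he => hxy (h1.trans he)) hx0 h2
    · by_cases h2 : y = x0
      · rw [h2]
        by_cases h3 : x = y0
        · rw [h3]; exact hsymm _ _
        · calc F x x0 = F x0 x := hsymm _ _
            _ = F x0 y0 := hpair x0 x y0 (fun he => h1 he.symm) hx0 h3
      · by_cases h3 : y = y0
        · rw [h3]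
          calc F x y0 = F y0 x := hsymm _ _
            _ = F y0 x0 := hpair y0 x x0 (fun he => hxy (he.symm.trans h3.symm)) (Ne.symm hx0) h1
            _ = F x0 y0 := hsymm _ _
        · by_cases h4 : x = y0
          · rw [h4]
            calc F y0 y = F y0 x0 := hpair y0 y x0 (fun he => h3 he.symm) (Ne.symm hx0) h2
              _ = F x0 y0 := hsymm _ _
          · calc F x y = F x y0 := hpair x y y0 hxy h4 h3
              _ = F y0 x := hsymm _ _
              _ = F y0 x0 := hpair y0 x x0 (Ne.symm h4) (Ne.symm hx0) h1
              _ = F x0 y0 := hsymm _ _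
  -- final case analysis
  have main0 : F x0 y0 = 0 → G = G' := by
    intro hc
    ext x y
    by_cases hxy : x = y
    · subst hxy; simp
    · have hthis := (hconst x y hxy).trans hc
      simp only [hF] at hthis
      constructor
      · intro ha
        by_contra hb
        rw [if_pos ha, if_neg hb] at hthis
        exact h1ne (by linear_combination hthis)
      · intro hb
        by_contra ha
        rw [if_neg ha, if_pos hb] at hthis
        exact hneg1 (by linear_combination hthis)
  have main1 : F x0 y0 = 1 → G = ⊤ ∧ G' = ⊥ := by
    intro hc
    have claim : ∀ x y : V, x ≠ y → G.Adj x y ∧ ¬ G'.Adj x y := by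
      intro x y hxy
      have hthis := (hconst x y hxy).trans hc
      simp only [hF] at hthis
      by_cases ha : G.Adj x y <;> by_cases hb : G'.Adj x y
      · rw [if_pos ha, if_pos hb] at hthis
        exact absurd (by linear_combination -hthis) h1ne
      · exact ⟨ha, hb⟩
      · rw [if_neg ha, if_pos hb] at hthis
        exact absurd (by linear_combination -hthis : (1 : ZMod p) = -1) h1n
      · rw [if_neg ha, if_neg hb] at hthis
        exact absurd (by linear_combination -hthis) h1ne
    constructor
    · ext x y
      simp only [SimpleGraph.top_adj]
      exact ⟨fun ha => G.ne_of_adj ha, fun hne => (claim x y hne).1⟩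
    · ext x y
      simp only [SimpleGraph.bot_adj, iff_false]
      intro hb
      exact (claim x y (G'.ne_of_adj hb)).2 hb
  have main2 : F x0 y0 = -1 → G = ⊥ ∧ G' = ⊤ := by
    intro hc
    have claim : ∀ x y : V, x ≠ y → ¬ G.Adj x y ∧ G'.Adj x y := by
      intro x y hxy
      have hthis := (hconst x y hxy).trans hc
      simp only [hF] at hthis
      by_cases ha : G.Adj x y <;> by_cases hb : G'.Adj x y
      · rw [if_pos ha, if_pos hb] at hthis
        exact absurd (by linear_combination -hthis) hneg1
      · rw [if_pos ha, if_neg hb] at hthis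
        exact absurd (by linear_combination hthis : (1 : ZMod p) = -1) h1n
      · exact ⟨ha, hb⟩
      · rw [if_neg ha, if_neg hb] at hthis
        exact absurd (by linear_combination -hthis) hneg1
    constructor
    · ext x y
      simp only [SimpleGraph.bot_adj, iff_false]
      intro ha
      exact (claim x y (G.ne_of_adj ha)).1 ha
    · ext x y
      simp only [SimpleGraph.top_adj]
      exact ⟨fun hb => G'.ne_of_adj hb, fun hne => (claim x y hne).2⟩
  by_cases hA : G.Adj x0 y0 <;> by_cases hB : G'.Adj x0 y0
  · exact Or.inl (main0 (by simp [hF, hA, hB]))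
  · exact Or.inr (Or.inl (main1 (by simp [hF, hA, hB])))
  · exact Or.inr (Or.inr (main2 (by simp [hF, hA, hB])))
  · exact Or.inl (main0 (by simp [hF, hA, hB]))
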